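/- Let d ≥ 1 be an integer and p ∈ (0,1). Every pmf q on {0,…,d} with mean dp can be written as a convex combination q = Σ_i λ_i r_i, where λ_i ≥ 0, Σ_i λ_i = 1, and the r_i range over the ray densities: the pmfs r_{j1,j2} (for integers 0 ≤ j1 < pd < j2 ≤ d) with r_{j1,j2}(j1) = (j2 − pd)/(j2 − j1), r_{j1,j2}(j2) = (pd − j1)/(j2 − j1), and r_{j1,j2}(j) = 0 otherwise, together with the Dirac pmf δ_{pd} when pd is an integer. -/

import Mathlib

open Finset

private lemma two_point_sum {m : ℕ} (i1 i2 : Fin m) (h : i1 ≠ i2) (a b : ℝ)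
    (f : Fin m → ℝ) :
    ∑ j, f j * (if j.val = i1.val then a else if j.val = i2.val then b else 0)
      = f i1 * a + f i2 * b := by
  have key : (fun j : Fin m =>
      f j * (if j.val = i1.val then a else if j.val = i2.val then b else 0))
        = fun j => (if j = i1 then f i1 * a else 0) + (if j = i2 then f i2 * b else 0) := by
    funext j
    simp only [Fin.val_eq_val]
    rcases eq_or_ne j i1 with rfl | h1
    · simp [h]
    · rcases eq_or_ne j i2 with rfl | h2
      · simp [h1]
      · simp [h1, h2]
  rw [key, Finset.sum_add_distrib]
  simp

private lemma stmt5_aux (d : ℕ) (p : ℝ)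
    (R : Set (Fin (d + 1) → ℝ))
    (hR : R = {r : Fin (d + 1) → ℝ |
      (∃ j1 j2 : ℕ, (j1 : ℝ) < p * d ∧ p * d < (j2 : ℝ) ∧ j2 ≤ d ∧
        r = fun j : Fin (d + 1) =>
          if j.val = j1 then ((j2 : ℝ) - p * d) / ((j2 : ℝ) - (j1 : ℝ))
          else if j.val = j2 then (p * d - (j1 : ℝ)) / ((j2 : ℝ) - (j1 : ℝ))
          else 0) ∨
      (∃ k : ℕ, (k : ℝ) = p * d ∧
        r = fun j : Fin (d + 1) => if j.val = k then 1 else 0)}) :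
    ∀ n : ℕ, ∀ q : Fin (d + 1) → ℝ,
      (univ.filter (fun j => q j ≠ 0)).card ≤ n →
      (∀ j, 0 ≤ q j) → ∑ j, q j = 1 → ∑ j, (j.val : ℝ) * q j = p * d →
      q ∈ convexHull ℝ R := by
  intro n
  induction n with
  | zero =>
    intro q hcard hq0 hq1 hqm
    exfalso
    have hz : ∀ j, q j = 0 := by
      intro j
      by_contra h
      have hj : j ∈ univ.filter (fun j => q j ≠ 0) := by simp [h]
      have := Finset.card_pos.2 ⟨j, hj⟩
      omega
    simp [hz] at hq1
  | succ n ih =>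
    intro q hcard hq0 hq1 hqm
    set S := univ.filter (fun j => q j ≠ 0) with hS
    have hSne : S.Nonempty := by
      rcases Finset.eq_empty_or_nonempty S with he | hne
      · exfalso
        have hz : ∀ j, q j = 0 := by
          intro j
          by_contra h
          have hj : j ∈ S := by simp [hS, h]
          simp [he] at hj
        simp [hz] at hq1
      · exact hne
    have hmemS : ∀ j, j ∈ S ↔ q j ≠ 0 := by intro j; simp [hS]
    rcases le_or_gt S.card 1 with hle1 | hgt1
    · -- Dirac case
      have hone : S.card = 1 := le_antisymm hle1 (Finset.card_pos.2 hSne)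
      obtain ⟨k, hk⟩ := Finset.card_eq_one.1 hone
      have hz : ∀ j, j ≠ k → q j = 0 := by
        intro j hj
        by_contra h
        have : j ∈ S := (hmemS j).2 h
        rw [hk] at this
        exact hj (Finset.mem_singleton.1 this)
      have hqk : q k = 1 := by
        have h : ∑ j, q j = q k :=
          Finset.sum_eq_single_of_mem k (mem_univ k) (fun j _ hj => hz j hj)
        rw [← hq1, h]
      have hkval : ((k.val : ℕ) : ℝ) = p * d := by
        have h : ∑ j, (j.val : ℝ) * q j = (k.val : ℝ) * q k :=
          Finset.sum_eq_single_of_mem k (mem_univ k) (fun j _ hj => by simp [hz j hj])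
        rw [← hqm, h, hqk, mul_one]
      have hqr : q = fun j : Fin (d+1) => if j.val = k.val then 1 else 0 := by
        funext j
        rcases eq_or_ne j k with rfl | hj
        · simp [hqk]
        · rw [hz j hj]
          have : ¬ (j.val = k.val) := fun h => hj (Fin.val_injective h)
          simp [this]
      apply subset_convexHull ℝ R
      rw [hR]
      exact Or.inr ⟨k.val, hkval, hqr⟩
    · -- two-point case
      set i1 := S.min' hSne with hi1def
      set i2 := S.max' hSne with hi2def
      have h12 : i1 < i2 := Finset.min'_lt_max'_of_card S hgt1
      have h12ne : i1 ≠ i2 := ne_of_lt h12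
      have hi1S : i1 ∈ S := Finset.min'_mem S hSne
      have hi2S : i2 ∈ S := Finset.max'_mem S hSne
      have hq1pos : 0 < q i1 := lt_of_le_of_ne (hq0 i1) (Ne.symm ((hmemS i1).1 hi1S))
      have hq2pos : 0 < q i2 := lt_of_le_of_ne (hq0 i2) (Ne.symm ((hmemS i2).1 hi2S))
      have hvlt : (i1.val : ℝ) < (i2.val : ℝ) := by exact_mod_cast h12
      -- mean strictly between i1 and i2
      have hterm1 : ∀ j : Fin (d+1), 0 ≤ ((j.val : ℝ) - i1.val) * q j := by
        intro j
        rcases eq_or_ne (q j) 0 with h | h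
        · rw [h, mul_zero]
        · have : i1 ≤ j := Finset.min'_le S j ((hmemS j).2 h)
          have : (i1.val : ℝ) ≤ (j.val : ℝ) := by exact_mod_cast this
          exact mul_nonneg (by linarith) (hq0 j)
      have hterm2 : ∀ j : Fin (d+1), 0 ≤ ((i2.val : ℝ) - j.val) * q j := by
        intro j
        rcases eq_or_ne (q j) 0 with h | h
        · rw [h, mul_zero]
        · have : j ≤ i2 := Finset.le_max' S j ((hmemS j).2 h)
          have : (j.val : ℝ) ≤ (i2.val : ℝ) := by exact_mod_cast this
          exact mul_nonneg (by linarith) (hq0 j)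
      have hsum1 : ∑ j, ((j.val : ℝ) - i1.val) * q j = p * d - i1.val := by
        have : ∀ j : Fin (d+1), ((j.val : ℝ) - i1.val) * q j
            = (j.val : ℝ) * q j - (i1.val : ℝ) * q j := fun j => by ring
        rw [Finset.sum_congr rfl (fun j _ => this j), Finset.sum_sub_distrib, hqm,
          ← Finset.mul_sum, hq1, mul_one]
      have hsum2 : ∑ j, ((i2.val : ℝ) - j.val) * q j = (i2.val : ℝ) - p * d := by
        have : ∀ j : Fin (d+1), ((i2.val : ℝ) - j.val) * q j
            = (i2.val : ℝ) * q j - (j.val : ℝ) * q j := fun j => by ring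
        rw [Finset.sum_congr rfl (fun j _ => this j), Finset.sum_sub_distrib, hqm,
          ← Finset.mul_sum, hq1, mul_one]
      have hi1lt : (i1.val : ℝ) < p * d := by
        have hle : ((i2.val : ℝ) - i1.val) * q i2 ≤ ∑ j, ((j.val : ℝ) - i1.val) * q j :=
          Finset.single_le_sum (fun j _ => hterm1 j) (mem_univ i2)
        have hpos : 0 < ((i2.val : ℝ) - i1.val) * q i2 :=
          mul_pos (by linarith) hq2pos
        rw [hsum1] at hle
        linarith
      have hi2gt : p * d < (i2.val : ℝ) := by
        have hle : ((i2.val : ℝ) - i1.val) * q i1 ≤ ∑ j, ((i2.val : ℝ) - j.val) * q j :=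
          Finset.single_le_sum (fun j _ => hterm2 j) (mem_univ i1)
        have hpos : 0 < ((i2.val : ℝ) - i1.val) * q i1 :=
          mul_pos (by linarith) hq1pos
        rw [hsum2] at hle
        linarith
      -- the ray density
      set A : ℝ := ((i2.val : ℝ) - p * d) / ((i2.val : ℝ) - i1.val) with hAdef
      set B : ℝ := (p * d - (i1.val : ℝ)) / ((i2.val : ℝ) - i1.val) with hBdef
      have hden : (0:ℝ) < (i2.val : ℝ) - i1.val := by linarith
      have hA : 0 < A := div_pos (by linarith) hden
      have hB : 0 < B := div_pos (by linarith) hden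
      have hAB : A + B = 1 := by
        rw [hAdef, hBdef, ← add_div]
        field_simp
        ring
      set r : Fin (d+1) → ℝ :=
        fun j => if j.val = i1.val then A else if j.val = i2.val then B else 0 with hrdef
      have hrR : r ∈ R := by
        rw [hR]
        exact Or.inl ⟨i1.val, i2.val, hi1lt, hi2gt, i2.is_le, rfl⟩
      have hri1 : r i1 = A := by simp [hrdef]
      have hri2 : r i2 = B := by
        have : ¬ (i2.val = i1.val) := fun h => h12ne (Fin.val_injective h).symm
        simp [hrdef, this]
      have hrz : ∀ j, j ≠ i1 → j ≠ i2 → r j = 0 := by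
        intro j hj1 hj2
        have e1 : ¬ (j.val = i1.val) := fun h => hj1 (Fin.val_injective h)
        have e2 : ¬ (j.val = i2.val) := fun h => hj2 (Fin.val_injective h)
        simp [hrdef, e1, e2]
      have hrsum : ∑ j, r j = 1 := by
        have := two_point_sum i1 i2 h12ne A B (fun _ => 1)
        simpa [hrdef, hAB] using this
      have hrmean : ∑ j, (j.val : ℝ) * r j = p * d := by
        have := two_point_sum i1 i2 h12ne A B (fun j : Fin (d+1) => (j.val : ℝ))
        rw [hrdef]
        rw [this, hAdef, hBdef]
        field_simp
        ring
      -- the mixing weight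
      set lam : ℝ := min (q i1 / A) (q i2 / B) with hlamdef
      have hlam0 : 0 < lam := lt_min (div_pos hq1pos hA) (div_pos hq2pos hB)
      have hlam1 : lam ≤ q i1 / A := min_le_left _ _
      have hlam2 : lam ≤ q i2 / B := min_le_right _ _
      have hlA : lam * A ≤ q i1 := by
        have h := mul_le_mul_of_nonneg_right hlam1 hA.le
        rwa [div_mul_cancel₀ _ (ne_of_gt hA)] at h
      have hlB : lam * B ≤ q i2 := by
        have h := mul_le_mul_of_nonneg_right hlam2 hB.le
        rwa [div_mul_cancel₀ _ (ne_of_gt hB)] at h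
      have hnn : ∀ j, 0 ≤ q j - lam * r j := by
        intro j
        rcases eq_or_ne j i1 with rfl | hj1
        · rw [hri1]; linarith
        · rcases eq_or_ne j i2 with rfl | hj2
          · rw [hri2]; linarith
          · rw [hrz j hj1 hj2, mul_zero, sub_zero]; exact hq0 j
      rcases le_or_gt 1 lam with hge | hlt
      · -- q = r
        have hA' : A ≤ q i1 := by
          have h := mul_le_mul_of_nonneg_right hge hA.le
          rw [one_mul] at h
          exact h.trans hlA
        have hB' : B ≤ q i2 := by
          have h := mul_le_mul_of_nonneg_right hge hB.le
          rw [one_mul] at h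
          exact h.trans hlB
        have hnn' : ∀ j ∈ (univ : Finset (Fin (d+1))), 0 ≤ q j - r j := by
          intro j _
          rcases eq_or_ne j i1 with rfl | hj1
          · rw [hri1]; linarith
          · rcases eq_or_ne j i2 with rfl | hj2
            · rw [hri2]; linarith
            · rw [hrz j hj1 hj2, sub_zero]; exact hq0 j
        have hsum0 : ∑ j, (q j - r j) = 0 := by
          rw [Finset.sum_sub_distrib, hq1, hrsum, sub_self]
        have hall := (Finset.sum_eq_zero_iff_of_nonneg hnn').1 hsum0
        have hqr : q = r := by
          funext j
          have := hall j (mem_univ j)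
          linarith
        rw [hqr]
        exact subset_convexHull ℝ R hrR
      · -- peel off the ray
        have h1l : 0 < 1 - lam := by linarith
        set q' : Fin (d+1) → ℝ := fun j => (q j - lam * r j) / (1 - lam) with hq'def
        have hq'0 : ∀ j, 0 ≤ q' j := fun j => div_nonneg (hnn j) h1l.le
        have hq'1 : ∑ j, q' j = 1 := by
          rw [hq'def, ← Finset.sum_div, Finset.sum_sub_distrib, ← Finset.mul_sum,
            hq1, hrsum, mul_one]
          field_simp
        have hq'mean : ∑ j, (j.val : ℝ) * q' j = p * d := by
          have : ∀ j : Fin (d+1), (j.val : ℝ) * q' j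
              = ((j.val : ℝ) * q j - lam * ((j.val : ℝ) * r j)) / (1 - lam) := by
            intro j; rw [hq'def]; ring
          rw [Finset.sum_congr rfl (fun j _ => this j), ← Finset.sum_div,
            Finset.sum_sub_distrib, ← Finset.mul_sum, hqm, hrmean]
          field_simp
        -- an index where q' vanishes but q doesn't
        obtain ⟨i0, hi0S, hi00⟩ : ∃ i0, i0 ∈ S ∧ q i0 - lam * r i0 = 0 := by
          rcases min_cases (q i1 / A) (q i2 / B) with ⟨heq, _⟩ | ⟨heq, _⟩
          · refine ⟨i1, hi1S, ?_⟩
            rw [hri1, ← hlamdef] at *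
            rw [heq, div_mul_cancel₀ _ (ne_of_gt hA), sub_self]
          · refine ⟨i2, hi2S, ?_⟩
            rw [hri2, ← hlamdef] at *
            rw [heq, div_mul_cancel₀ _ (ne_of_gt hB), sub_self]
        have hsubset : univ.filter (fun j => q' j ≠ 0) ⊆ S.erase i0 := by
          intro j hj
          have hj' : q' j ≠ 0 := (Finset.mem_filter.1 hj).2
          have hnum : q j - lam * r j ≠ 0 := by
            intro h
            apply hj'
            rw [hq'def]
            simp [h]
          refine Finset.mem_erase.2 ⟨?_, ?_⟩
          · intro h; rw [h] at hnum; exact hnum hi00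
          · refine (hmemS j).2 ?_
            intro hqj
            apply hnum
            have hj1 : j ≠ i1 := by
              intro h; rw [h] at hqj; exact (ne_of_gt hq1pos) hqj
            have hj2 : j ≠ i2 := by
              intro h; rw [h] at hqj; exact (ne_of_gt hq2pos) hqj
            rw [hqj, hrz j hj1 hj2, mul_zero, sub_zero]
        have hcard' : (univ.filter (fun j => q' j ≠ 0)).card ≤ n := by
          have h1 := Finset.card_le_card hsubset
          rw [Finset.card_erase_of_mem hi0S] at h1
          omega
        have hq'mem := ih q' hcard' hq'0 hq'1 hq'mean
        have hcombo : q = lam • r + (1 - lam) • q' := by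
          funext j
          simp only [Pi.add_apply, Pi.smul_apply, smul_eq_mul, hq'def]
          field_simp
          ring
        rw [hcombo]
        exact (convex_convexHull ℝ R) (subset_convexHull ℝ R hrR) hq'mem
          hlam0.le h1l.le (by ring)

/-- Every pmf on `{0,…,d}` with mean `dp` is a convex combination of the ray
densities: the two-point pmfs `r_{j1,j2}` (for `0 ≤ j1 < pd < j2 ≤ d`) together with the Dirac
pmf at `pd` when `pd` is an integer. -/
theorem stmt_5 (d : ℕ) (hd : 1 ≤ d) (p : ℝ) (hp : p ∈ Set.Ioo (0 : ℝ) 1)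
    (R : Set (Fin (d + 1) → ℝ))
    (hR : R = {r : Fin (d + 1) → ℝ |
      (∃ j1 j2 : ℕ, (j1 : ℝ) < p * d ∧ p * d < (j2 : ℝ) ∧ j2 ≤ d ∧
        r = fun j : Fin (d + 1) =>
          if j.val = j1 then ((j2 : ℝ) - p * d) / ((j2 : ℝ) - (j1 : ℝ))
          else if j.val = j2 then (p * d - (j1 : ℝ)) / ((j2 : ℝ) - (j1 : ℝ))
          else 0) ∨
      (∃ k : ℕ, (k : ℝ) = p * d ∧
        r = fun j : Fin (d + 1) => if j.val = k then 1 else 0)})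
    (q : Fin (d + 1) → ℝ) (hq0 : ∀ j, 0 ≤ q j) (hq1 : ∑ j, q j = 1)
    (hqmean : ∑ j, (j.val : ℝ) * q j = p * d) :
    q ∈ convexHull ℝ R := by
  exact stmt5_aux d p R hR (univ.filter (fun j => q j ≠ 0)).card q le_rfl hq0 hq1 hqmean
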